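/- arXiv:1407.3608 — 9 statements merged into one kernel-verified Lean document; each statement's English description precedes it below -/
import Mathlib

section
/- Let (X,d) be a (possibly asymmetric) metric space, b ∈ X, and let (z_n) be a forward admissible sequence in X. Then the sequence (d(b, z_n)) converges to a limit in ℝ. Moreover, if (z_n) and (z'_n) are equivalent forward admissible sequences, then lim d(b, z_n) = lim d(b, z'_n). -/
open Filter

/-- A sequence in a (possibly asymmetric) metric space is forward admissible if for all `ε > 0`
there exists `N` such that for all `n ≥ N` there exists `K` with `d(x_n, x_k) ≤ ε` for `k ≥ K`. -/
def FwdAdm {X : Type*} (d : X → X → ℝ) (x : ℕ → X) : Prop :=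
  ∀ ε > (0 : ℝ), ∃ N : ℕ, ∀ n ≥ N, ∃ K : ℕ, ∀ k ≥ K, d (x n) (x k) ≤ ε

/-- The interlace of two sequences: `z_{2n} = x_n`, `z_{2n+1} = y_n`. -/
def interlace {X : Type*} (x y : ℕ → X) : ℕ → X :=
  fun n => if n % 2 = 0 then x (n / 2) else y (n / 2)

lemma fwdAdm_tendsto {X : Type*} (d : X → X → ℝ)
    (hnonneg : ∀ x y, 0 ≤ d x y)
    (htri : ∀ x y z, d x z ≤ d x y + d y z)
    (b : X) (z : ℕ → X) (hz : FwdAdm d z) :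
    ∃ c : ℝ, Tendsto (fun n => d b (z n)) atTop (nhds c) := by
  set a : ℕ → ℝ := fun n => d b (z n) with ha
  have hbdd_ge : IsBoundedUnder (· ≥ ·) atTop a :=
    ⟨0, eventually_map.2 (Eventually.of_forall fun n => hnonneg _ _)⟩
  have hbdd_le : IsBoundedUnder (· ≤ ·) atTop a := by
    obtain ⟨N, hN⟩ := hz 1 one_pos
    obtain ⟨K, hK⟩ := hN N le_rfl
    refine ⟨a N + 1, eventually_atTop.2 ⟨K, fun k hk => ?_⟩⟩
    calc a k ≤ d b (z N) + d (z N) (z k) := htri _ _ _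
    _ ≤ a N + 1 := add_le_add le_rfl (hK k hk)
  have hcob : IsCoboundedUnder (· ≥ ·) atTop a := hbdd_le.isCoboundedUnder_ge
  set L := liminf a atTop with hL
  refine ⟨L, Metric.tendsto_atTop.2 fun ε hε => ?_⟩
  have hε3 : (0:ℝ) < ε / 3 := by linarith
  obtain ⟨N, hN⟩ := hz (ε / 3) hε3
  have hlow : ∀ n ≥ N, L - ε / 3 ≤ a n := by
    intro n hn
    obtain ⟨K, hK⟩ := hN n hn
    have : L ≤ a n + ε / 3 := by
      refine liminf_le_of_frequently_le ?_ hbdd_ge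
      refine (eventually_atTop.2 ⟨K, fun k hk => ?_⟩).frequently
      calc a k ≤ d b (z n) + d (z n) (z k) := htri _ _ _
      _ ≤ a n + ε / 3 := add_le_add le_rfl (hK k hk)
    linarith
  have hfreq : ∃ᶠ k in atTop, a k < L + ε / 3 :=
    frequently_lt_of_liminf_lt hcob (by linarith)
  obtain ⟨m, hm, hmN⟩ := (hfreq.and_eventually (eventually_ge_atTop N)).exists
  obtain ⟨K, hK⟩ := hN m hmN
  refine ⟨max N K, fun k hk => ?_⟩
  have hkN : k ≥ N := le_trans (le_max_left _ _) hk
  have hkK : k ≥ K := le_trans (le_max_right _ _) hk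
  have h1 : a k ≤ a m + ε / 3 := by
    calc a k ≤ d b (z m) + d (z m) (z k) := htri _ _ _
    _ ≤ a m + ε / 3 := add_le_add le_rfl (hK k hkK)
  have h2 := hlow k hkN
  rw [Real.dist_eq, abs_sub_lt_iff]
  constructor <;> linarith

lemma interlace_even {X : Type*} (x y : ℕ → X) (n : ℕ) :
    interlace x y (2 * n) = x n := by
  simp [interlace, Nat.mul_mod_right, Nat.mul_div_cancel_left n (by norm_num : 0 < 2)]

lemma interlace_odd {X : Type*} (x y : ℕ → X) (n : ℕ) :
    interlace x y (2 * n + 1) = y n := by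
  have h1 : (2 * n + 1) % 2 = 1 := by omega
  have h2 : (2 * n + 1) / 2 = n := by omega
  simp [interlace, h1, h2]

/-- For a forward admissible sequence `(z_n)` in an asymmetric metric space with basepoint `b`,
the sequence `d(b, z_n)` converges; moreover equivalent forward admissible sequences (i.e. whose
interlace is forward admissible) give the same limit. -/
theorem stmt_1 {X : Type*} (d : X → X → ℝ)
    (hnonneg : ∀ x y, 0 ≤ d x y)
    (hsep : ∀ x y, d x y = 0 ↔ x = y)
    (htri : ∀ x y z, d x z ≤ d x y + d y z)
    (b : X) (z : ℕ → X) (hz : FwdAdm d z) :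
    (∃ c : ℝ, Tendsto (fun n => d b (z n)) atTop (nhds c)) ∧
    ∀ z' : ℕ → X, FwdAdm d z' → FwdAdm d (interlace z z') →
      ∀ c c' : ℝ, Tendsto (fun n => d b (z n)) atTop (nhds c) →
        Tendsto (fun n => d b (z' n)) atTop (nhds c') → c = c' := by
  refine ⟨fwdAdm_tendsto d hnonneg htri b z hz, ?_⟩
  intro z' hz' hint c c' hc hc'
  obtain ⟨c'', hc''⟩ := fwdAdm_tendsto d hnonneg htri b (interlace z z') hint
  have heven : Tendsto (fun n : ℕ => 2 * n) atTop atTop :=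
    tendsto_atTop_atTop.2 fun m => ⟨m, fun n hn => by omega⟩
  have hodd : Tendsto (fun n : ℕ => 2 * n + 1) atTop atTop :=
    tendsto_atTop_atTop.2 fun m => ⟨m, fun n hn => by omega⟩
  have h1 : Tendsto (fun n => d b (z n)) atTop (nhds c'') := by
    have := hc''.comp heven
    simpa [Function.comp_def, interlace_even] using this
  have h2 : Tendsto (fun n => d b (z' n)) atTop (nhds c'') := by
    have := hc''.comp hodd
    simpa [Function.comp_def, interlace_odd] using this
  rw [tendsto_nhds_unique hc h1, tendsto_nhds_unique hc' h2]
end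

section
/- Let (X,d) be a quasi-proper asymmetric metric space with basepoint b, and for z ∈ X let ψ_z(x) = d(x,z) − d(b,z). If (z_n) and (z'_n) are equivalent forward admissible sequences in X such that (ψ_{z_n}) converges pointwise to ψ and (ψ_{z'_n}) converges pointwise to ψ', then ψ = ψ'. -/
open Filter

/-- For a forward admissible sequence `u`, the sequence `d x (u n)` converges. -/
lemma fwdAdm_dist_converges {X : Type*} (d : X → X → ℝ) (hnonneg : ∀ x y, 0 ≤ d x y)
    (htri : ∀ x y z, d x z ≤ d x y + d y z) (u : ℕ → X) (hu : FwdAdm d u) (x : X) :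
    ∃ L, Tendsto (fun n => d x (u n)) atTop (nhds L) := by
  set f : ℕ → ℝ := fun n => d x (u n) with hf
  have hb_below : IsBoundedUnder (· ≥ ·) atTop f :=
    isBoundedUnder_of ⟨0, fun n => hnonneg x (u n)⟩
  have hb_above : IsBoundedUnder (· ≤ ·) atTop f := by
    obtain ⟨N, hN⟩ := hu 1 one_pos
    obtain ⟨K, hK⟩ := hN N le_rfl
    refine ⟨f N + 1, eventually_atTop.2 ⟨K, fun k hk => ?_⟩⟩
    have h1 := htri x (u N) (u k)
    have h2 := hK k hk
    show d x (u k) ≤ d x (u N) + 1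
    linarith
  have hcb : IsCoboundedUnder (· ≥ ·) atTop f := hb_above.isCoboundedUnder_ge
  have hcb' : IsCoboundedUnder (· ≤ ·) atTop f := hb_below.isCoboundedUnder_le
  set L := liminf f atTop with hL
  have hsup_le : limsup f atTop ≤ L := by
    refine le_of_forall_pos_le_add fun ε hε => ?_
    obtain ⟨N, hN⟩ := hu (ε / 2) (by linarith)
    have hfreq : ∃ᶠ n in atTop, f n < L + ε / 2 :=
      frequently_lt_of_liminf_lt hcb (by linarith)
    obtain ⟨n, hn1, hn2⟩ := (hfreq.and_eventually (eventually_ge_atTop N)).exists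
    obtain ⟨K, hK⟩ := hN n hn2
    refine limsup_le_of_le hcb' (eventually_atTop.2 ⟨K, fun k hk => ?_⟩)
    have h1 := htri x (u n) (u k)
    have h2 := hK k hk
    have h3 : d x (u n) < L + ε / 2 := hn1
    show d x (u k) ≤ L + ε
    linarith
  have hle : L ≤ limsup f atTop := liminf_le_limsup hb_above hb_below
  exact ⟨L, tendsto_of_liminf_eq_limsup rfl (le_antisymm hsup_le hle) hb_above hb_below⟩

/-- In a quasi-proper asymmetric metric space (geodesic asymmetric metric whose symmetrization
is a proper metric, with symmetric convergence of sequences), if `(z_n)` and `(z'_n)` are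
equivalent forward admissible sequences and `ψ_{z_n} → ψ`, `ψ_{z'_n} → ψ'` pointwise, where
`ψ_z(x) = d(x,z) - d(b,z)`, then `ψ = ψ'`. -/
theorem stmt_2 {X : Type*} [MetricSpace X] [ProperSpace X] (d : X → X → ℝ)
    (hnonneg : ∀ x y, 0 ≤ d x y)
    (hsep : ∀ x y, d x y = 0 ↔ x = y)
    (htri : ∀ x y z, d x z ≤ d x y + d y z)
    (hsym : ∀ x y : X, dist x y = d x y + d y x)
    (hgeo : ∀ x y : X, ∃ γ : ℝ → X, γ 0 = x ∧ γ (d x y) = y ∧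
      ∀ s t : ℝ, 0 ≤ s → s ≤ t → t ≤ d x y → d (γ s) (γ t) = t - s)
    (hconv : ∀ (x : X) (u : ℕ → X),
      Tendsto (fun n => d (u n) x) atTop (nhds 0) ↔ Tendsto (fun n => d x (u n)) atTop (nhds 0))
    (b : X) (z z' : ℕ → X) (hz : FwdAdm d z) (hz' : FwdAdm d z')
    (hequiv : FwdAdm d (interlace z z'))
    (ψ ψ' : X → ℝ)
    (hψ : ∀ x, Tendsto (fun n => d x (z n) - d b (z n)) atTop (nhds (ψ x)))
    (hψ' : ∀ x, Tendsto (fun n => d x (z' n) - d b (z' n)) atTop (nhds (ψ' x))) :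
    ψ = ψ' := by
  -- For each x, d x (interlace z z' n) converges to some M x; both d x (z n) and d x (z' n)
  -- converge to the same M x since they are subsequences.
  have h2 : Tendsto (fun n : ℕ => 2 * n) atTop atTop :=
    tendsto_atTop_atTop.2 fun b => ⟨b, fun a ha => by omega⟩
  have h2' : Tendsto (fun n : ℕ => 2 * n + 1) atTop atTop :=
    tendsto_atTop_atTop.2 fun b => ⟨b, fun a ha => by omega⟩
  have heven : ∀ n : ℕ, interlace z z' (2 * n) = z n := by
    intro n; simp [interlace, Nat.mul_mod_right]
  have hodd : ∀ n : ℕ, interlace z z' (2 * n + 1) = z' n := by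
    intro n
    have h1 : (2 * n + 1) % 2 = 1 := by omega
    have h2 : (2 * n + 1) / 2 = n := by omega
    simp [interlace, h1, h2]
  have key : ∀ x : X, ∃ M : ℝ, Tendsto (fun n => d x (z n)) atTop (nhds M) ∧
      Tendsto (fun n => d x (z' n)) atTop (nhds M) := by
    intro x
    obtain ⟨M, hM⟩ := fwdAdm_dist_converges d hnonneg htri _ hequiv x
    refine ⟨M, ?_, ?_⟩
    · have := hM.comp h2
      simpa [Function.comp_def, heven] using this
    · have := hM.comp h2'
      simpa [Function.comp_def, hodd] using this
  funext x
  obtain ⟨Mx, hMx, hMx'⟩ := key x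
  obtain ⟨Mb, hMb, hMb'⟩ := key b
  have e1 : ψ x = Mx - Mb := tendsto_nhds_unique (hψ x) (hMx.sub hMb)
  have e2 : ψ' x = Mx - Mb := tendsto_nhds_unique (hψ' x) (hMx'.sub hMb')
  rw [e1, e2]
end

section
/- Let (X,d) be a (possibly asymmetric) metric space with basepoint b, and for z ∈ X let ψ_z(x) = d(x,z) − d(b,z). Let (z_n) and (z'_n) be forward admissible sequences such that (ψ_{z_n}) and (ψ_{z'_n}) converge pointwise to the same function ψ. Then (z_n) and (z'_n) are equivalent, i.e. the map from the forward metric completion to the horoboundary functions is injective. -/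
open Filter

/-- `HasC d x y c` says that `c = c((x_n),(y_n))`: for all `ε > 0` there is `N` such that for all
`n ≥ N` there is `K` such that `|d(x_n, y_k) - c| ≤ ε` for all `k ≥ K`. -/
def HasC {X : Type*} (d : X → X → ℝ) (x y : ℕ → X) (c : ℝ) : Prop :=
  ∀ ε > (0 : ℝ), ∃ N : ℕ, ∀ n ≥ N, ∃ K : ℕ, ∀ k ≥ K, |d (x n) (y k) - c| ≤ ε

lemma key_hasC {X : Type*} (d : X → X → ℝ)
    (hnonneg : ∀ x y, 0 ≤ d x y)
    (b : X) (z z' : ℕ → X) (hz : FwdAdm d z) (hz' : FwdAdm d z')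
    (ψ : X → ℝ)
    (hψ : ∀ x, Tendsto (fun n => d x (z n) - d b (z n)) atTop (nhds (ψ x)))
    (hψ' : ∀ x, Tendsto (fun n => d x (z' n) - d b (z' n)) atTop (nhds (ψ x))) :
    HasC d z z' 0 := by
  intro ε hε
  have hδ : (0:ℝ) < ε/6 := by linarith
  obtain ⟨N', hN'⟩ := hz' (ε/6) hδ
  obtain ⟨K0, hK0⟩ := hN' N' le_rfl
  obtain ⟨K1, hK1⟩ := Metric.tendsto_atTop.mp (hψ' (z' N')) (ε/6) hδ
  obtain ⟨K2, hK2⟩ := Metric.tendsto_atTop.mp (hψ (z' N')) (ε/6) hδ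
  obtain ⟨N, hN⟩ := hz (ε/6) hδ
  refine ⟨N, fun n hn => ?_⟩
  obtain ⟨K3, hK3⟩ := hN n hn
  obtain ⟨K4, hK4⟩ := Metric.tendsto_atTop.mp (hψ (z n)) (ε/6) hδ
  obtain ⟨K5, hK5⟩ := Metric.tendsto_atTop.mp (hψ' (z n)) (ε/6) hδ
  -- Step (E): ψ (z n) ≤ ψ (z' N') + 3 * (ε/6)
  have hE : ψ (z n) ≤ ψ (z' N') + 3 * (ε/6) := by
    set j := max K3 (max K2 K4) with hj
    have h1 : d (z n) (z j) ≤ ε/6 := hK3 j (le_max_left _ _)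
    have h2 := hK2 j (le_trans (le_max_left _ _) (le_max_right _ _))
    have h3 := hK4 j (le_trans (le_max_right _ _) (le_max_right _ _))
    rw [Real.dist_eq] at h2 h3
    have h2' := abs_le.mp h2.le
    have h3' := abs_le.mp h3.le
    have hd := hnonneg (z' N') (z j)
    linarith [h2'.1, h2'.2, h3'.1, h3'.2]
  refine ⟨max K0 (max K1 K5), fun k hk => ?_⟩
  have hk0 : k ≥ K0 := le_trans (le_max_left _ _) hk
  have hk1 : k ≥ K1 := le_trans (le_trans (le_max_left _ _) (le_max_right _ _)) hk
  have hk5 : k ≥ K5 := le_trans (le_trans (le_max_right _ _) (le_max_right _ _)) hk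
  have hC := hK1 k hk1
  have h0 := hK0 k hk0
  have h5 := hK5 k hk5
  rw [Real.dist_eq] at hC h5
  have hC' := abs_le.mp hC.le
  have h5' := abs_le.mp h5.le
  have hd := hnonneg (z n) (z' k)
  rw [sub_zero, abs_of_nonneg hd]
  linarith [hC'.1, hC'.2, h5'.1, h5'.2, hE]

/-- If two forward admissible sequences `(z_n)`, `(z'_n)` in a (possibly asymmetric) metric space
have associated functions `ψ_{z_n}(x) = d(x,z_n) - d(b,z_n)` converging pointwise to the same
function `ψ`, then the two sequences are equivalent, i.e.
`c((z_n),(z'_n)) = c((z'_n),(z_n)) = 0`. -/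
theorem stmt_3 {X : Type*} (d : X → X → ℝ)
    (hnonneg : ∀ x y, 0 ≤ d x y)
    (hsep : ∀ x y, d x y = 0 ↔ x = y)
    (htri : ∀ x y z, d x z ≤ d x y + d y z)
    (b : X) (z z' : ℕ → X) (hz : FwdAdm d z) (hz' : FwdAdm d z')
    (ψ : X → ℝ)
    (hψ : ∀ x, Tendsto (fun n => d x (z n) - d b (z n)) atTop (nhds (ψ x)))
    (hψ' : ∀ x, Tendsto (fun n => d x (z' n) - d b (z' n)) atTop (nhds (ψ x))) :
    HasC d z z' 0 ∧ HasC d z' z 0 := by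
  exact ⟨key_hasC d hnonneg b z z' hz hz' ψ hψ hψ', key_hasC d hnonneg b z' z hz' hz ψ hψ' hψ⟩
end

section
/- Let (X,d) be an asymmetric metric space with basepoint b. Suppose z = (z_n) and z^k = (z^k_n) (k ∈ ℕ) are forward admissible sequences representing points of the forward completion, with associated limit horofunctions ψ_z and ψ_{z^k} (pointwise limits of ψ_{z_n} and ψ_{z^k_n} respectively). If the extended distances satisfy c(z^k, z) → 0 and c(z, z^k) → 0 as k → ∞, then ψ_{z^k} converges to ψ_z uniformly on X. -/
open Filter

/-- For a nonnegative sequence `g`, past any threshold `T` there is an index `m ≥ T`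
whose value is (up to `δ`) below all values at indices `≥ T`. -/
lemma almost_min (g : ℕ → ℝ) (h0 : ∀ n, 0 ≤ g n) {δ : ℝ} (hδ : 0 < δ) (T : ℕ) :
    ∃ m ≥ T, ∀ j ≥ T, g m ≤ g j + δ := by
  set S : Set ℝ := g '' Set.Ici T with hS
  have hne : S.Nonempty := ⟨g T, ⟨T, le_refl T, rfl⟩⟩
  have hbdd : BddBelow S := ⟨0, by rintro y ⟨i, _, rfl⟩; exact h0 i⟩
  obtain ⟨a, ⟨m, hmT, rfl⟩, ha⟩ := Real.lt_sInf_add_pos hne hδ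
  refine ⟨m, hmT, fun j hj => ?_⟩
  have hjS : g j ∈ S := ⟨j, hj, rfl⟩
  have := csInf_le hbdd hjS
  linarith

/-- Key comparison: if the cross extended distances between `u` and `v` are `cu` and `cv`,
and the horofunction limits at `x` are `A` (along `u`) and `B` (along `v`),
then `A ≤ B + (cu + cv)`. -/
lemma key_le {X : Type*} (d : X → X → ℝ)
    (hnonneg : ∀ x y, 0 ≤ d x y)
    (htri : ∀ x y z, d x z ≤ d x y + d y z)
    (b x : X) (u v : ℕ → X) (cu cv A B : ℝ)
    (hcu : HasC d u v cu) (hcv : HasC d v u cv)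
    (hA : Tendsto (fun n => d x (u n) - d b (u n)) atTop (nhds A))
    (hB : Tendsto (fun n => d x (v n) - d b (v n)) atTop (nhds B)) :
    A ≤ B + (cu + cv) := by
  refine le_of_forall_pos_le_add fun ε hε => ?_
  have hδ : 0 < ε / 5 := by linarith
  obtain ⟨N1, hN1⟩ := hcu (ε / 5) hδ
  obtain ⟨N2, hN2⟩ := hcv (ε / 5) hδ
  obtain ⟨M1, hM1⟩ := Metric.tendsto_atTop.1 hB (ε / 5) hδ
  obtain ⟨M2, hM2⟩ := Metric.tendsto_atTop.1 hA (ε / 5) hδ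
  obtain ⟨m, hmT, hm⟩ := almost_min (fun n => d b (v n)) (fun n => hnonneg b (v n)) hδ (max N2 M1)
  obtain ⟨K2, hK2⟩ := hN2 m (le_trans (le_max_left _ _) hmT)
  set n := max (max K2 N1) M2 with hn
  obtain ⟨K1, hK1⟩ := hN1 n (le_max_of_le_left (le_max_right _ _))
  set j := max K1 (max N2 M1) with hj
  have e1 : |d x (v m) - d b (v m) - B| < ε / 5 := by
    have := hM1 m (le_trans (le_max_right _ _) hmT); rwa [Real.dist_eq] at this
  have e2 : |d x (u n) - d b (u n) - A| < ε / 5 := by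
    have := hM2 n (le_max_right _ _); rwa [Real.dist_eq] at this
  have e3 : |d (v m) (u n) - cv| ≤ ε / 5 := hK2 n (le_max_of_le_left (le_max_left _ _))
  have e4 : |d (u n) (v j) - cu| ≤ ε / 5 := hK1 j (le_max_left _ _)
  have e5 : d b (v m) ≤ d b (v j) + ε / 5 := hm j (le_max_right _ _)
  have t1 : d x (u n) ≤ d x (v m) + d (v m) (u n) := htri _ _ _
  have t2 : d b (v j) ≤ d b (u n) + d (u n) (v j) := htri _ _ _
  have a1 := abs_lt.1 e1
  have a2 := abs_lt.1 e2
  have a3 := abs_le.1 e3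
  have a4 := abs_le.1 e4
  linarith [a1.1, a1.2, a2.1, a2.2, a3.1, a3.2, a4.1, a4.2]

/-- If `z` and `z^k` are forward admissible sequences with associated limit horofunctions `ψ` and
`ψk k` (pointwise limits of `x ↦ d(x, z_n) - d(b, z_n)`), and the extended distances satisfy
`c(z^k, z) → 0` and `c(z, z^k) → 0` as `k → ∞`, then `ψ_{z^k} → ψ_z` uniformly on `X`. -/
theorem stmt_4 {X : Type*} (d : X → X → ℝ)
    (hnonneg : ∀ x y, 0 ≤ d x y)
    (hsep : ∀ x y, d x y = 0 ↔ x = y)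
    (htri : ∀ x y z, d x z ≤ d x y + d y z)
    (b : X) (z : ℕ → X) (zk : ℕ → ℕ → X)
    (hz : FwdAdm d z) (hzk : ∀ k, FwdAdm d (zk k))
    (ψ : X → ℝ) (ψk : ℕ → X → ℝ)
    (hψ : ∀ x, Tendsto (fun n => d x (z n) - d b (z n)) atTop (nhds (ψ x)))
    (hψk : ∀ k x, Tendsto (fun n => d x (zk k n) - d b (zk k n)) atTop (nhds (ψk k x)))
    (c c' : ℕ → ℝ)
    (hc : ∀ k, HasC d (zk k) z (c k)) (hc' : ∀ k, HasC d z (zk k) (c' k))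
    (hc0 : Tendsto c atTop (nhds 0)) (hc'0 : Tendsto c' atTop (nhds 0)) :
    ∀ ε > (0 : ℝ), ∃ K : ℕ, ∀ k ≥ K, ∀ x : X, |ψk k x - ψ x| ≤ ε := by
  intro ε hε
  have hε2 : 0 < ε / 2 := by linarith
  obtain ⟨K1, hK1⟩ := Metric.tendsto_atTop.1 hc0 (ε / 2) hε2
  obtain ⟨K2, hK2⟩ := Metric.tendsto_atTop.1 hc'0 (ε / 2) hε2
  refine ⟨max K1 K2, fun k hk x => ?_⟩
  have hck : |c k| < ε / 2 := by
    have := hK1 k (le_trans (le_max_left _ _) hk)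
    rwa [Real.dist_eq, sub_zero] at this
  have hck' : |c' k| < ε / 2 := by
    have := hK2 k (le_trans (le_max_right _ _) hk)
    rwa [Real.dist_eq, sub_zero] at this
  have h1 : ψk k x ≤ ψ x + (c k + c' k) :=
    key_le d hnonneg htri b x (zk k) z (c k) (c' k) (ψk k x) (ψ x)
      (hc k) (hc' k) (hψk k x) (hψ x)
  have h2 : ψ x ≤ ψk k x + (c' k + c k) :=
    key_le d hnonneg htri b x z (zk k) (c' k) (c k) (ψ x) (ψk k x)
      (hc' k) (hc k) (hψ x) (hψk k x)
  have hc1 := abs_lt.1 hck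
  have hc2 := abs_lt.1 hck'
  rw [abs_le]
  constructor <;> linarith
end

section
/- Let (X,d) be an asymmetric metric space and let γ' : ℝ≥0 → X be a path such that for a fixed sequence of points γ'(n) (n ∈ ℕ) one has: (i) n − 1/n ≤ d(γ'(0), γ'(n)) ≤ n + 1/n for all n ≥ 1, and (ii) n − k − 2/k ≤ d(γ'(k), γ'(n)) ≤ n − k + 2/k for all 1 ≤ k < n, and γ' restricted to [n, n+1] is a geodesic from γ'(n) to γ'(n+1). Then γ' is an almost geodesic ray: for all ε > 0 there exists t_0 such that for all t_0 ≤ s ≤ t, |d(γ'(0), γ'(s)) + d(γ'(s), γ'(t)) − t| ≤ ε. -/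
set_option maxHeartbeats 1000000 in
/-- Let `(X,d)` be an asymmetric metric space and `γ : ℝ≥0 → X` a path such that the points
`γ(n)` (`n ∈ ℕ`) satisfy `n - 1/n ≤ d(γ(0), γ(n)) ≤ n + 1/n` for `n ≥ 1`, and
`n - k - 2/k ≤ d(γ(k), γ(n)) ≤ n - k + 2/k` for `1 ≤ k < n`, and `γ` restricted to each
`[n, n+1]` is a (constant-speed) geodesic from `γ(n)` to `γ(n+1)`. Then `γ` is an almost
geodesic ray. -/
theorem stmt_5 {X : Type*} (d : X → X → ℝ)
    (hnonneg : ∀ x y, 0 ≤ d x y)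
    (hsep : ∀ x y, d x y = 0 ↔ x = y)
    (htri : ∀ x y z, d x z ≤ d x y + d y z)
    (γ : ℝ → X)
    (hends : ∀ n : ℕ, 1 ≤ n →
      (n : ℝ) - 1 / n ≤ d (γ 0) (γ n) ∧ d (γ 0) (γ n) ≤ (n : ℝ) + 1 / n)
    (hmid : ∀ k n : ℕ, 1 ≤ k → k < n →
      (n : ℝ) - k - 2 / k ≤ d (γ k) (γ n) ∧ d (γ k) (γ n) ≤ (n : ℝ) - k + 2 / k)
    (hgeo : ∀ n : ℕ, ∀ u v : ℝ, (n : ℝ) ≤ u → u ≤ v → v ≤ (n : ℝ) + 1 →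
      d (γ u) (γ v) = (v - u) * d (γ n) (γ ((n : ℝ) + 1))) :
    ∀ ε > (0 : ℝ), ∃ t₀ : ℝ, 0 ≤ t₀ ∧ ∀ s t : ℝ, t₀ ≤ s → s ≤ t →
      |d (γ 0) (γ s) + d (γ s) (γ t) - t| ≤ ε := by
  intro ε hε
  set N : ℕ := max 1 ⌈9/ε⌉₊ with hNdef
  have hN1 : 1 ≤ N := le_max_left _ _
  have hN0 : (0:ℝ) < N := by exact_mod_cast Nat.lt_of_lt_of_le Nat.zero_lt_one hN1
  have hNε : 9 / (N:ℝ) ≤ ε := by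
    have h2 : 9/ε ≤ (N:ℝ) := by
      have h1 := Nat.le_ceil (9/ε)
      have hle : ((⌈9/ε⌉₊ : ℕ) : ℝ) ≤ N := by exact_mod_cast le_max_right 1 ⌈9/ε⌉₊
      linarith
    rw [div_le_iff₀ hN0]
    rw [div_le_iff₀ hε] at h2
    nlinarith
  refine ⟨N, le_of_lt hN0, ?_⟩
  intro s t hs hst
  have hs0 : (0:ℝ) ≤ s := le_trans hN0.le hs
  have ht0 : (0:ℝ) ≤ t := le_trans hs0 hst
  set m := ⌊s⌋₊ with hmdef
  set p := ⌊t⌋₊ with hpdef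
  have hms : (m:ℝ) ≤ s := Nat.floor_le hs0
  have hsm : s < m+1 := Nat.lt_floor_add_one s
  have hpt : (p:ℝ) ≤ t := Nat.floor_le ht0
  have htp : t < p+1 := Nat.lt_floor_add_one t
  have hNm : N ≤ m := Nat.le_floor hs
  have hm1 : 1 ≤ m := le_trans hN1 hNm
  have hm0 : (0:ℝ) < m := by exact_mod_cast Nat.lt_of_lt_of_le Nat.zero_lt_one hm1
  have hmp : m ≤ p := Nat.floor_le_floor hst
  have hp1 : 1 ≤ p := le_trans hm1 hmp
  have hp0 : (0:ℝ) < p := by exact_mod_cast Nat.lt_of_lt_of_le Nat.zero_lt_one hp1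
  have hmR : (m:ℝ) ≤ p := by exact_mod_cast hmp
  have h2pm : 2/(p:ℝ) ≤ 2/(m:ℝ) := by gcongr
  have h9m : 9/(m:ℝ) ≤ ε := by
    have hNmR : (N:ℝ) ≤ m := by exact_mod_cast hNm
    have : 9/(m:ℝ) ≤ 9/(N:ℝ) := by gcongr
    linarith
  have hinvm : (0:ℝ) ≤ 1/(m:ℝ) := by positivity
  have em2 : (0:ℝ) ≤ 2/(m:ℝ) := by positivity
  have em4 : (0:ℝ) ≤ 4/(m:ℝ) := by positivity
  have em3 : (3:ℝ)/(m:ℝ) = 1/(m:ℝ) + 2/(m:ℝ) := by ring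
  have em5 : (5:ℝ)/(m:ℝ) = 3/(m:ℝ) + 2/(m:ℝ) := by ring
  have em6 : (6:ℝ)/(m:ℝ) = 2/(m:ℝ) + 2/(m:ℝ) + 2/(m:ℝ) := by ring
  have em9 : (9:ℝ)/(m:ℝ) = 3/(m:ℝ) + 6/(m:ℝ) := by ring
  have em95 : (9:ℝ)/(m:ℝ) = 5/(m:ℝ) + 4/(m:ℝ) := by ring
  -- segment estimates within one geodesic piece
  have seg : ∀ k : ℕ, 1 ≤ k → ∀ x y : ℝ, (k:ℝ) ≤ x → x ≤ y → y ≤ (k:ℝ)+1 →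
      y - x - 2/(k:ℝ) ≤ d (γ x) (γ y) ∧ d (γ x) (γ y) ≤ y - x + 2/(k:ℝ) := by
    intro k hk x y hx hxy hy
    have hk0 : (0:ℝ) < k := by exact_mod_cast Nat.lt_of_lt_of_le Nat.zero_lt_one hk
    have hL := hmid k (k+1) hk (Nat.lt_succ_self k)
    push_cast at hL
    have e := hgeo k x y hx hxy hy
    have h1 : (0:ℝ) ≤ y - x := by linarith
    have h2 : y - x ≤ 1 := by linarith
    have h3 : (0:ℝ) ≤ 2/(k:ℝ) := by positivity
    constructor
    · nlinarith [mul_le_mul_of_nonneg_left hL.1 h1, mul_le_mul_of_nonneg_right h2 h3]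
    · nlinarith [mul_le_mul_of_nonneg_left hL.2 h1, mul_le_mul_of_nonneg_right h2 h3]
  -- bounds on d(γ0, γs)
  have hd0s_ub : d (γ 0) (γ s) ≤ s + 3/(m:ℝ) := by
    have t1 := htri (γ 0) (γ (m:ℝ)) (γ s)
    have t2 := (seg m hm1 (m:ℝ) s le_rfl hms hsm.le).2
    have t3 := (hends m hm1).2
    linarith
  have hd0s_lb : s - 3/(m:ℝ) ≤ d (γ 0) (γ s) := by
    have t1 := htri (γ 0) (γ s) (γ ((m:ℝ)+1))
    have t2 := (seg m hm1 s ((m:ℝ)+1) hms hsm.le le_rfl).2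
    have t3 := (hends (m+1) (by omega)).1
    push_cast at t3
    have h4 : 1/((m:ℝ)+1) ≤ 1/(m:ℝ) := by gcongr <;> linarith
    linarith
  rcases eq_or_lt_of_le hmp with hcase | hcase
  · -- same interval
    have htm1 : t ≤ (m:ℝ)+1 := by
      have : (m:ℝ) = p := by exact_mod_cast hcase
      rw [this]; exact htp.le
    have hdst := seg m hm1 s t hms hst htm1
    rw [abs_le]
    constructor <;> linarith [hdst.1, hdst.2]
  · -- different intervals
    have hp_ge : (m:ℝ)+1 ≤ p := by exact_mod_cast Nat.succ_le_of_lt hcase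
    have hA := (seg m hm1 (m:ℝ) s le_rfl hms hsm.le).2
    have hB := (seg m hm1 s ((m:ℝ)+1) hms hsm.le le_rfl).2
    have hC := (seg p hp1 (p:ℝ) t le_rfl hpt htp.le).2
    have hD := (seg p hp1 t ((p:ℝ)+1) hpt htp.le le_rfl).2
    have hmidpt : d (γ ((m:ℝ)+1)) (γ (p:ℝ)) ≤ (p:ℝ) - (m:ℝ) - 1 + 2/(m:ℝ) := by
      rcases eq_or_lt_of_le (Nat.succ_le_of_lt hcase) with h | h
      · have hp' : (p:ℝ) = (m:ℝ)+1 := by exact_mod_cast h.symm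
        rw [hp']
        have h0 : d (γ ((m:ℝ)+1)) (γ ((m:ℝ)+1)) = 0 := (hsep _ _).2 rfl
        rw [h0]
        linarith
      · have h5 := (hmid (m+1) p (by omega) h).2
        push_cast at h5
        have h6 : 2/((m:ℝ)+1) ≤ 2/(m:ℝ) := by gcongr <;> linarith
        linarith
    have hE := (hmid m (p+1) hm1 (by omega)).1
    push_cast at hE
    have T1 := htri (γ s) (γ ((m:ℝ)+1)) (γ t)
    have T2 := htri (γ ((m:ℝ)+1)) (γ (p:ℝ)) (γ t)
    have T3 := htri (γ (m:ℝ)) (γ s) (γ ((p:ℝ)+1))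
    have T4 := htri (γ s) (γ t) (γ ((p:ℝ)+1))
    have hub : d (γ s) (γ t) ≤ t - s + 6/(m:ℝ) := by linarith
    have hlb : t - s - 6/(m:ℝ) ≤ d (γ s) (γ t) := by linarith
    rw [abs_le]
    constructor <;> linarith
end

section
/- Any F_N-chain of actions has at most N − 1 non-leaf nodes. That is, if τ is a finite rooted tree whose nodes are labelled by subgroups of F_N with root labelled F_N, such that the children of each non-leaf node labelled H are a set of representatives of conjugacy classes of point stabilizers of a nontrivial minimal very small H-tree with dense H-orbits, then the number of non-leaf nodes of τ is at most N − 1. -/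
/-- `ChainOfActions n p` : there is an `F_n`-chain of actions (for a free group of rank `n`)
with `p` non-leaf nodes. A leaf (trivial action) contributes no non-leaf node. A non-leaf node
corresponds to a nontrivial minimal very small action with dense orbits of a rank-`n` free group
(hence `n ≥ 2`, since every ℤ-action on a tree with dense orbits is trivial); its children are
representatives of the conjugacy classes of (nontrivial) point stabilizers, which are free groups
of ranks `r i < n` that satisfy the Gaboriau–Levitt index inequality
`∑ (2 r i - 1) ≤ 2 n - 2`. -/
inductive ChainOfActions : ℕ → ℕ → Prop where
  | leaf (n : ℕ) : ChainOfActions n 0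
  | node {n : ℕ} (hn : 2 ≤ n) {k : ℕ} (r p : Fin k → ℕ)
      (hpos : ∀ i, 1 ≤ r i)
      (hrank : ∀ i, r i < n)
      (hGL : (∑ i, (2 * (r i : ℤ) - 1)) ≤ 2 * (n : ℤ) - 2)
      (hchild : ∀ i, ChainOfActions (r i) (p i)) :
      ChainOfActions n (1 + ∑ i, p i)

lemma chain_aux {n p : ℕ} (h : ChainOfActions n p) : (p : ℤ) ≤ (n : ℤ) - 1 ∨ p = 0 := by
  induction h with
  | leaf n => exact Or.inr rfl
  | node hn r p hpos hrank hGL hchild ih =>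
    left
    have hbound : ∀ i, (p i : ℤ) ≤ (r i : ℤ) - 1 := by
      intro i
      rcases ih i with h' | h'
      · exact h'
      · simp [h']
        exact_mod_cast hpos i
    rename_i n k
    have hsum : (∑ i, (p i : ℤ)) ≤ ∑ i, ((r i : ℤ) - 1) :=
      Finset.sum_le_sum fun i _ => hbound i
    have hGL' : (2 : ℤ) * (∑ i, ((r i : ℤ) - 1)) + k ≤ 2 * n - 2 := by
      have : (∑ i, (2 * (r i : ℤ) - 1)) = 2 * (∑ i, ((r i : ℤ) - 1)) + k := by
        have he : ∀ i : Fin k, 2 * (r i : ℤ) - 1 = 2 * ((r i : ℤ) - 1) + 1 := fun i => by ring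
        rw [Finset.sum_congr rfl (fun i _ => he i), Finset.sum_add_distrib, Finset.sum_const,
          Finset.mul_sum]
        simp
      linarith [hGL, this.symm.trans_le hGL]
    push_cast
    rcases Nat.eq_zero_or_pos k with hk | hk
    · subst hk
      simp
      omega
    · have hk1 : (1 : ℤ) ≤ k := by exact_mod_cast hk
      set S : ℤ := ∑ i, ((r i : ℤ) - 1)
      have : 2 * S ≤ 2 * n - 3 := by linarith
      have hS : S ≤ (n : ℤ) - 2 := by omega
      linarith

/-- Any `F_N`-chain of actions has at most `N - 1` non-leaf nodes. -/
theorem stmt_7 (N p : ℕ) (hN : 1 ≤ N) (h : ChainOfActions N p) : p ≤ N - 1 := by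
  rcases chain_aux h with h' | h'
  · omega
  · omega
end

section
/- Let η = Σ_{i=1}^k λ_i [x_1 x_2^i] and η' = Σ_{i=1}^k λ'_i [x_1 x_2^i] be linear combinations of rational geodesic currents on F_N, where x_1, x_2 belong to a common free basis of F_N. If η and η' are translation-equivalent (i.e., ⟨T, η⟩ = ⟨T, η'⟩ for all T in unprojectivized Culler–Vogtmann outer space cv_N), then λ_i = λ'_i for all i, hence η = η'. -/
/-- The `ℓ`-weighted word length of a reduced word in the free group on `Fin N`. -/
def wlen {N : ℕ} (ℓ : Fin N → ℝ) (g : FreeGroup (Fin N)) : ℝ :=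
  ((FreeGroup.toWord g).map fun p => ℓ p.1).sum

/-- The translation length of `g` in the Cayley tree of `F_N` (with respect to the standard
basis, with edge lengths `ℓ`): the infimum of the weighted word lengths of the conjugates
of `g`. -/
noncomputable def tlen {N : ℕ} (ℓ : Fin N → ℝ) (g : FreeGroup (Fin N)) : ℝ :=
  sInf {r : ℝ | ∃ c : FreeGroup (Fin N), r = wlen ℓ (c * g * c⁻¹)}

open FreeGroup

namespace Stmt10Aux

variable {N : ℕ}

/-- exponent-sum homomorphism at generator `j0`. -/
noncomputable def es (j0 : Fin N) : FreeGroup (Fin N) →* Multiplicative ℤ :=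
  FreeGroup.lift fun j => Multiplicative.ofAdd (if j = j0 then 1 else 0)

lemma es_of (j0 j : Fin N) :
    es j0 (FreeGroup.of j) = Multiplicative.ofAdd (if j = j0 then (1:ℤ) else 0) :=
  FreeGroup.lift_apply_of

lemma es_conj (j0 : Fin N) (c g : FreeGroup (Fin N)) :
    es j0 (c * g * c⁻¹) = es j0 g := by
  rw [_root_.map_mul, _root_.map_mul, _root_.map_inv, mul_comm (es j0 c) (es j0 g), mul_inv_cancel_right]

lemma es_mk_bound (j0 : Fin N) (L : List (Fin N × Bool)) :
    |((es j0 (FreeGroup.mk L)).toAdd)| ≤ (L.countP fun p => p.1 = j0 : ℕ) := by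
  induction L with
  | nil => simp [es, FreeGroup.lift_mk]
  | cons x L ih =>
    have hx : FreeGroup.mk (x :: L) = FreeGroup.mk [x] * FreeGroup.mk L := by
      rw [FreeGroup.mul_mk]; rfl
    rw [hx, _root_.map_mul, toAdd_mul]
    have h1 : |((es j0 (FreeGroup.mk [x])).toAdd)| ≤ (if x.1 = j0 then (1:ℤ) else 0) := by
      rcases x with ⟨a, b⟩
      cases b <;> simp [es, FreeGroup.lift_mk] <;> split <;> simp
    have h2 := abs_add_le ((es j0 (FreeGroup.mk [x])).toAdd) ((es j0 (FreeGroup.mk L)).toAdd)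
    have h3 : (List.countP (fun p => decide (p.1 = j0)) (x :: L) : ℤ) =
        (List.countP (fun p => decide (p.1 = j0)) L : ℤ) + (if x.1 = j0 then 1 else 0) := by
      rw [List.countP_cons]; rcases eq_or_ne x.1 j0 with h | h <;> simp [h]
    rw [h3]
    rcases eq_or_ne x.1 j0 with h | h
    · rw [if_pos h] at h1 ⊢; omega
    · rw [if_neg h] at h1 ⊢; omega

end Stmt10Aux

namespace Stmt10Aux

variable {ℓ : Fin N → ℝ}

lemma wlen_nonneg (hl : ∀ j, 0 ≤ ℓ j) (g : FreeGroup (Fin N)) : 0 ≤ wlen ℓ g :=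
  List.sum_nonneg (by rintro a ha; obtain ⟨p, -, rfl⟩ := List.mem_map.1 ha; exact hl _)

lemma wlen_mul_le (hl : ∀ j, 0 ≤ ℓ j) (a b : FreeGroup (Fin N)) :
    wlen ℓ (a * b) ≤ wlen ℓ a + wlen ℓ b := by
  have h := (FreeGroup.toWord_mul_sublist a b).map (fun p => ℓ p.1)
  have h2 := List.Sublist.sum_le_sum h
    (by rintro r hr; obtain ⟨p, -, rfl⟩ := List.mem_map.1 hr; exact hl _)
  simpa [wlen, List.map_append, List.sum_append] using h2

lemma wlen_inv (g : FreeGroup (Fin N)) : wlen ℓ g⁻¹ = wlen ℓ g := by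
  simp [wlen, FreeGroup.toWord_inv, FreeGroup.invRev, List.map_reverse, List.sum_reverse,
    List.map_map, Function.comp_def]

lemma wlen_of (j : Fin N) : wlen ℓ (FreeGroup.of j) = ℓ j := by
  simp [wlen, FreeGroup.toWord_of]

lemma wlen_pow_le (hl : ∀ j, 0 ≤ ℓ j) (g : FreeGroup (Fin N)) (n : ℕ) :
    wlen ℓ (g ^ n) ≤ n * wlen ℓ g := by
  induction n with
  | zero => simp [wlen]
  | succ n ih =>
    calc wlen ℓ (g ^ (n + 1)) = wlen ℓ (g ^ n * g) := by rw [pow_succ]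
    _ ≤ wlen ℓ (g ^ n) + wlen ℓ g := wlen_mul_le hl _ _
    _ ≤ n * wlen ℓ g + wlen ℓ g := by linarith
    _ = (n + 1 : ℕ) * wlen ℓ g := by push_cast; ring

lemma wlen_zpow_le (hl : ∀ j, 0 ≤ ℓ j) (g : FreeGroup (Fin N)) (n : ℤ) :
    wlen ℓ (g ^ n) ≤ (n.natAbs : ℝ) * wlen ℓ g := by
  rcases n with m | m
  · simpa using wlen_pow_le hl g m
  · have e : wlen ℓ (g ^ (Int.negSucc m)) = wlen ℓ (g ^ (m + 1)) := by
      rw [Int.negSucc_eq, zpow_neg, wlen_inv,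
        show ((m : ℤ) + 1) = ((m + 1 : ℕ) : ℤ) by push_cast; ring, zpow_natCast]
    rw [e, show (Int.negSucc m).natAbs = m + 1 from rfl]
    exact wlen_pow_le hl g (m + 1)

lemma wlen_count_le (hl : ∀ j, 0 ≤ ℓ j) {i0 i1 : Fin N} (h01 : i0 ≠ i1)
    (L : List (Fin N × Bool)) :
    ℓ i0 * (L.countP fun p => p.1 = i0 : ℕ) + ℓ i1 * (L.countP fun p => p.1 = i1 : ℕ) ≤
      (L.map fun p => ℓ p.1).sum := by
  induction L with
  | nil => simp
  | cons x L ih =>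
    rw [List.map_cons, List.sum_cons, List.countP_cons, List.countP_cons]
    rcases eq_or_ne x.1 i0 with h | h
    · have h1 : ¬(i0 = i1) := h01
      rw [h]
      norm_num [h1]
      linarith [ih]
    · rcases eq_or_ne x.1 i1 with h2 | h2
      · have h3 : ¬(i1 = i0) := fun hh => h01 hh.symm
        rw [h2]
        norm_num [h3]
        linarith [ih]
      · norm_num [h, h2]
        linarith [ih, hl x.1]

end Stmt10Aux

namespace Stmt10Aux

variable {ℓ : Fin N → ℝ} {i0 i1 : Fin N}

lemma tlen_eq (hl : ∀ j, 0 < ℓ j) (h01 : i0 ≠ i1) (n : ℤ) :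
    tlen ℓ (FreeGroup.of i0 * FreeGroup.of i1 ^ n) = ℓ i0 + (n.natAbs : ℝ) * ℓ i1 := by
  have hl' : ∀ j, 0 ≤ ℓ j := fun j => (hl j).le
  set g := FreeGroup.of i0 * FreeGroup.of i1 ^ n with hg
  have h10 : i1 ≠ i0 := fun hh => h01 hh.symm
  have hes0 : (es i0 g).toAdd = 1 := by
    rw [hg, _root_.map_mul, _root_.map_zpow, toAdd_mul, toAdd_zpow, es_of, es_of]
    simp [h10]
  have hes1 : (es i1 g).toAdd = n := by
    rw [hg, _root_.map_mul, _root_.map_zpow, toAdd_mul, toAdd_zpow, es_of, es_of]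
    simp [h01]
  have hlb : ∀ c : FreeGroup (Fin N),
      ℓ i0 + (n.natAbs : ℝ) * ℓ i1 ≤ wlen ℓ (c * g * c⁻¹) := by
    intro c
    set w := c * g * c⁻¹ with hw
    have hb0 := es_mk_bound i0 (FreeGroup.toWord w)
    have hb1 := es_mk_bound i1 (FreeGroup.toWord w)
    rw [FreeGroup.mk_toWord, hw, es_conj, hes0] at hb0
    rw [FreeGroup.mk_toWord, hw, es_conj, hes1] at hb1
    have hc0 : (1 : ℝ) ≤ ((FreeGroup.toWord w).countP fun p => p.1 = i0 : ℕ) := by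
      exact_mod_cast by simpa using hb0
    have hc1 : ((n.natAbs : ℝ)) ≤ ((FreeGroup.toWord w).countP fun p => p.1 = i1 : ℕ) := by
      have : (n.natAbs : ℤ) ≤ ((FreeGroup.toWord w).countP fun p => p.1 = i1 : ℕ) := by
        rw [← Int.abs_eq_natAbs]; exact hb1
      exact_mod_cast this
    have hmain := wlen_count_le hl' h01 (FreeGroup.toWord w)
    have e1 : ℓ i0 * 1 ≤ ℓ i0 * ((FreeGroup.toWord w).countP fun p => p.1 = i0 : ℕ) :=
      mul_le_mul_of_nonneg_left hc0 (hl' i0)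
    have e2 : ℓ i1 * (n.natAbs : ℝ) ≤
        ℓ i1 * ((FreeGroup.toWord w).countP fun p => p.1 = i1 : ℕ) :=
      mul_le_mul_of_nonneg_left hc1 (hl' i1)
    have hdef : wlen ℓ w = ((FreeGroup.toWord w).map fun p => ℓ p.1).sum := rfl
    rw [hdef]
    linarith [hmain, e1, e2]
  have hub : wlen ℓ g ≤ ℓ i0 + (n.natAbs : ℝ) * ℓ i1 := by
    have h1 := wlen_mul_le hl' (FreeGroup.of i0) (FreeGroup.of i1 ^ n)
    have h2 := wlen_zpow_le hl' (FreeGroup.of i1) n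
    rw [wlen_of] at h1
    rw [wlen_of] at h2
    rw [← hg] at h1
    nlinarith [h1, h2]
  have hmem : wlen ℓ g ∈ {r : ℝ | ∃ c : FreeGroup (Fin N), r = wlen ℓ (c * g * c⁻¹)} :=
    ⟨1, by simp⟩
  apply le_antisymm
  · exact le_trans (csInf_le ⟨ℓ i0 + (n.natAbs : ℝ) * ℓ i1, by
      rintro r ⟨c, rfl⟩; exact hlb c⟩ hmem) hub
  · exact le_csInf ⟨_, hmem⟩ (by rintro r ⟨c, rfl⟩; exact hlb c)

def psi (i0 i1 : Fin N) (m : ℤ) : FreeGroup (Fin N) →* FreeGroup (Fin N) :=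
  FreeGroup.lift fun j =>
    if j = i0 then FreeGroup.of i0 * FreeGroup.of i1 ^ m else FreeGroup.of j

lemma psi_of_self (m : ℤ) :
    psi i0 i1 m (FreeGroup.of i0) = FreeGroup.of i0 * FreeGroup.of i1 ^ m := by
  rw [psi, FreeGroup.lift_apply_of, if_pos rfl]

lemma psi_of_ne {j : Fin N} (h : j ≠ i0) (m : ℤ) :
    psi i0 i1 m (FreeGroup.of j) = FreeGroup.of j := by
  rw [psi, FreeGroup.lift_apply_of, if_neg h]

lemma psi_comp (h01 : i0 ≠ i1) (m m' : ℤ) :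
    (psi i0 i1 m).comp (psi i0 i1 m') = psi i0 i1 (m + m') := by
  have h10 : i1 ≠ i0 := fun hh => h01 hh.symm
  apply FreeGroup.ext_hom
  intro j
  rcases eq_or_ne j i0 with h | h
  · subst h
    rw [MonoidHom.comp_apply, psi_of_self, _root_.map_mul, _root_.map_zpow,
      psi_of_self, psi_of_ne h10, psi_of_self, mul_assoc, ← zpow_add]
  · rw [MonoidHom.comp_apply, psi_of_ne h, psi_of_ne h, psi_of_ne h]

lemma psi_zero (i0 i1 : Fin N) : psi i0 i1 0 = MonoidHom.id _ := by
  apply FreeGroup.ext_hom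
  intro j
  rcases eq_or_ne j i0 with h | h
  · subst h; rw [psi_of_self]; simp
  · rw [psi_of_ne h]; rfl

def phiE (h01 : i0 ≠ i1) (m : ℤ) : FreeGroup (Fin N) ≃* FreeGroup (Fin N) :=
  MonoidHom.toMulEquiv (psi i0 i1 m) (psi i0 i1 (-m))
    (by rw [psi_comp h01]; simp [psi_zero])
    (by rw [psi_comp h01]; simp [psi_zero])

lemma phiE_apply (h01 : i0 ≠ i1) (m e : ℤ) :
    phiE h01 m (FreeGroup.of i0 * FreeGroup.of i1 ^ e) =
      FreeGroup.of i0 * FreeGroup.of i1 ^ (m + e) := by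
  have h10 : i1 ≠ i0 := fun hh => h01 hh.symm
  show psi i0 i1 m _ = _
  rw [_root_.map_mul, _root_.map_zpow, psi_of_self, psi_of_ne h10, mul_assoc, ← zpow_add]

end Stmt10Aux

open Stmt10Aux in
/-- Let `η = ∑ λ_i [x₁x₂^i]` and `η' = ∑ λ'_i [x₁x₂^i]` be linear combinations of rational
currents, where `x₁ = of 0`, `x₂ = of 1` belong to the standard free basis of `F_N`. If `η` and
`η'` are translation-equivalent, i.e. they give the same value on every tree of unprojectivized
outer space — in particular on every Cayley tree of a free basis `φ⁻¹(standard basis)` with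
arbitrary positive edge lengths `ℓ` — then `λ_i = λ'_i` for all `i`, hence `η = η'`. -/
theorem stmt_10 (N : ℕ) (hN : 2 ≤ N) (k : ℕ) (lam lam' : Fin k → ℝ)
    (x₁ x₂ : FreeGroup (Fin N))
    (hx₁ : x₁ = FreeGroup.of ⟨0, by omega⟩) (hx₂ : x₂ = FreeGroup.of ⟨1, by omega⟩)
    (tequiv : ∀ (φ : FreeGroup (Fin N) ≃* FreeGroup (Fin N)) (ℓ : Fin N → ℝ),
      (∀ j, 0 < ℓ j) →
      ∑ i : Fin k, lam i * tlen ℓ (φ (x₁ * x₂ ^ ((i : ℕ) + 1))) =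
        ∑ i : Fin k, lam' i * tlen ℓ (φ (x₁ * x₂ ^ ((i : ℕ) + 1)))) :
    ∀ i, lam i = lam' i := by
  set i0 : Fin N := ⟨0, by omega⟩ with hi0
  set i1 : Fin N := ⟨1, by omega⟩ with hi1
  have h01 : i0 ≠ i1 := by simp [hi0, hi1, Fin.ext_iff]
  set d : Fin k → ℝ := fun i => lam i - lam' i with hd
  -- abbreviation for the absolute-value coefficients
  set a : ℤ → Fin k → ℝ := fun m i => (((m + (i : ℕ) + 1 : ℤ)).natAbs : ℝ) with ha
  have key : ∀ (m : ℤ) (ℓ : Fin N → ℝ), (∀ j, 0 < ℓ j) →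
      ∑ i : Fin k, d i * (ℓ i0 + a m i * ℓ i1) = 0 := by
    intro m ℓ hℓ
    have harg : ∀ i : Fin k, (phiE h01 m) (x₁ * x₂ ^ ((i : ℕ) + 1)) =
        FreeGroup.of i0 * FreeGroup.of i1 ^ (m + (i : ℕ) + 1 : ℤ) := by
      intro i
      rw [hx₁, hx₂, ← zpow_natCast (FreeGroup.of i1) ((i : ℕ) + 1)]
      rw [phiE_apply h01 m (((i : ℕ) + 1 : ℕ) : ℤ)]
      congr 1
      push_cast
      ring
    have htlen : ∀ i : Fin k, tlen ℓ ((phiE h01 m) (x₁ * x₂ ^ ((i : ℕ) + 1))) =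
        ℓ i0 + a m i * ℓ i1 := by
      intro i
      rw [harg i, tlen_eq hℓ h01]
    have h := tequiv (phiE h01 m) ℓ hℓ
    simp only [htlen] at h
    have e : (∑ i : Fin k, d i * (ℓ i0 + a m i * ℓ i1)) =
        (∑ i : Fin k, lam i * (ℓ i0 + a m i * ℓ i1)) -
        (∑ i : Fin k, lam' i * (ℓ i0 + a m i * ℓ i1)) := by
      rw [← Finset.sum_sub_distrib]
      exact Finset.sum_congr rfl fun i _ => by rw [hd]; ring
    rw [e, h, sub_self]
  have hone : ∀ j : Fin N, (0:ℝ) < (fun _ : Fin N => (1:ℝ)) j := fun _ => one_pos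
  have htwo : ∀ j : Fin N, (0:ℝ) < (fun j : Fin N => if j = i0 then (2:ℝ) else 1) j := by
    intro j; by_cases h : j = i0 <;> simp [h]
  have h1 : ∀ m : ℤ, ∑ i : Fin k, d i * (1 + a m i) = 0 := by
    intro m
    simpa using key m (fun _ => 1) hone
  have h2 : ∀ m : ℤ, ∑ i : Fin k, d i * (2 + a m i) = 0 := by
    intro m
    have h10 : i1 ≠ i0 := fun hh => h01 hh.symm
    have := key m (fun j => if j = i0 then (2:ℝ) else 1) htwo
    simpa [h10] using this
  have hS : ∑ i : Fin k, d i = 0 := by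
    have e : ∑ i : Fin k, d i =
        (∑ i : Fin k, d i * (2 + a 0 i)) - ∑ i : Fin k, d i * (1 + a 0 i) := by
      rw [← Finset.sum_sub_distrib]
      exact Finset.sum_congr rfl fun i _ => by ring
    rw [e, h1 0, h2 0, sub_zero]
  have hA : ∀ m : ℤ, ∑ i : Fin k, d i * a m i = 0 := by
    intro m
    have e : ∑ i : Fin k, d i * a m i =
        (∑ i : Fin k, d i * (1 + a m i)) - ∑ i : Fin k, d i := by
      rw [← Finset.sum_sub_distrib]
      exact Finset.sum_congr rfl fun i _ => by ring
    rw [e, h1 m, hS, sub_zero]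
  intro i
  have hcoef : ∀ j : Fin k,
      a (-(i:ℕ) - 2) j + a (-(i:ℕ)) j - 2 * a (-(i:ℕ) - 1) j
        = if j = i then 2 else 0 := by
    intro j
    by_cases hji : j = i
    · subst hji
      rw [if_pos rfl, ha]
      have e1 : ((-(j:ℕ) - 2 : ℤ) + (j:ℕ) + 1).natAbs = 1 := by omega
      have e2 : ((-(j:ℕ) : ℤ) + (j:ℕ) + 1).natAbs = 1 := by omega
      have e3 : ((-(j:ℕ) - 1 : ℤ) + (j:ℕ) + 1).natAbs = 0 := by omega
      simp only [e1, e2, e3]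
      norm_num
    · rw [if_neg hji, ha]
      have hv : (j : ℕ) ≠ (i : ℕ) := fun h => hji (Fin.ext h)
      have e : ((-(i:ℕ) - 2 : ℤ) + (j:ℕ) + 1).natAbs + ((-(i:ℕ) : ℤ) + (j:ℕ) + 1).natAbs
          = 2 * ((-(i:ℕ) - 1 : ℤ) + (j:ℕ) + 1).natAbs := by omega
      have e' := congrArg (fun n : ℕ => (n : ℝ)) e
      push_cast at e'
      simp only
      linarith
  have hsum : ∑ j : Fin k,
      d j * (a (-(i:ℕ) - 2) j + a (-(i:ℕ)) j - 2 * a (-(i:ℕ) - 1) j) = 2 * d i := by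
    rw [Finset.sum_congr rfl fun j _ => by rw [hcoef j]]
    simp only [mul_ite, mul_zero]
    rw [Finset.sum_ite_eq' Finset.univ i (fun j => d j * 2)]
    simp [mul_comm]
  have hzero : ∑ j : Fin k,
      d j * (a (-(i:ℕ) - 2) j + a (-(i:ℕ)) j - 2 * a (-(i:ℕ) - 1) j) = 0 := by
    have e : ∑ j : Fin k,
        d j * (a (-(i:ℕ) - 2) j + a (-(i:ℕ)) j - 2 * a (-(i:ℕ) - 1) j)
        = (∑ j : Fin k, d j * a (-(i:ℕ) - 2) j) + (∑ j : Fin k, d j * a (-(i:ℕ)) j)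
          - 2 * ∑ j : Fin k, d j * a (-(i:ℕ) - 1) j := by
      rw [Finset.mul_sum, ← Finset.sum_add_distrib, ← Finset.sum_sub_distrib]
      exact Finset.sum_congr rfl fun j _ => by ring
    rw [e, hA, hA, hA]
    ring
  have hdi : d i = 0 := by rw [hsum] at hzero; linarith
  have hfin : lam i - lam' i = 0 := hdi
  linarith
end

section
/- Let G be a countable group, μ a probability measure on G, and ν a μ-stationary Borel probability measure on a compact G-space X. Let D be a countable G-set and Θ : X → D a measurable G-equivariant map. If E ⊆ X is a G-invariant measurable subset with ν(E) > 0, then Θ(E) contains a finite orbit of the subgroup generated by the support of μ. -/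
open MeasureTheory

/-- Maximum principle (Ballmann, Woess, Kaimanovich–Masur): let `G` be a countable group, `μ` a
probability measure on `G` (given by its weights), `ν` a `μ`-stationary Borel probability measure
on a compact `G`-space `X`, `D` a countable `G`-set and `Θ : X → D` a measurable `G`-equivariant
map. If `E ⊆ X` is a `G`-invariant measurable subset with `ν(E) > 0`, then `Θ(E)` contains a
point whose orbit under the subgroup generated by the support of `μ` is finite. -/
theorem stmt_14 {G : Type*} [Group G] [Countable G]
    {X : Type*} [TopologicalSpace X] [CompactSpace X] [MeasurableSpace X] [BorelSpace X]
    [MulAction G X]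
    {D : Type*} [Countable D] [MulAction G D] [MeasurableSpace D] [MeasurableSingletonClass D]
    (μ : G → ENNReal) (hμ : (∑' g : G, μ g) = 1)
    (ν : Measure X) [IsProbabilityMeasure ν]
    (hstat : ∀ s : Set X, MeasurableSet s → ν s = ∑' g : G, μ g * ν ((fun x => g • x) ⁻¹' s))
    (Θ : X → D) (hΘmeas : Measurable Θ)
    (hΘequiv : ∀ (g : G) (x : X), Θ (g • x) = g • Θ x)
    (E : Set X) (hEmeas : MeasurableSet E)
    (hEinv : ∀ g : G, (fun x => g • x) ⁻¹' E = E)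
    (hEpos : 0 < ν E) :
    ∃ x ∈ E, Set.Finite
      {e : D | ∃ g ∈ Subgroup.closure {g : G | μ g ≠ 0}, e = g • Θ x} := by
  classical
  -- the weight function on D
  set f : D → ENNReal := fun d => ν (E ∩ Θ ⁻¹' {d}) with hf
  have hmeas : ∀ d : D, MeasurableSet (E ∩ Θ ⁻¹' {d}) :=
    fun d => hEmeas.inter (hΘmeas (measurableSet_singleton d))
  -- total mass
  have htot : (∑' d : D, f d) = ν E := by
    rw [← measure_iUnion (fun d d' hdd' => by
        simp only [Function.onFun, Set.disjoint_left]
        rintro x ⟨-, hx⟩ ⟨-, hx'⟩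
        exact hdd' (hx.symm.trans hx')) hmeas]
    congr 1
    ext x
    simp
  have htot_ne_top : (∑' d : D, f d) ≠ ⊤ := by
    rw [htot]; exact (measure_lt_top ν E).ne
  -- the supremum
  set M : ENNReal := ⨆ d : D, f d with hM
  have hDne : Nonempty D := by
    obtain ⟨x, hx⟩ := nonempty_of_measure_ne_zero hEpos.ne'
    exact ⟨Θ x⟩
  have hMpos : 0 < M := by
    by_contra h
    push_neg at h
    have : ∀ d, f d = 0 := fun d => le_antisymm ((le_iSup f d).trans h) bot_le
    have : ν E = 0 := by rw [← htot]; simp [this]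
    exact hEpos.ne' this
  have hMle : M ≤ ν E := by
    rw [← htot]; exact iSup_le fun d => ENNReal.le_tsum d
  have hMtop : M ≠ ⊤ := (hMle.trans_lt (measure_lt_top ν E)).ne
  -- the level set above M/2 is finite and the sup is attained
  have hT : {d : D | M / 2 ≤ f d}.Finite :=
    ENNReal.finite_const_le_of_tsum_ne_top htot_ne_top
      (by simp [ENNReal.div_eq_zero_iff, hMpos.ne'])
  have hhalf : M / 2 < M := ENNReal.half_lt_self hMpos.ne' hMtop
  have hTne : {d : D | M / 2 ≤ f d}.Nonempty := by
    obtain ⟨d, hd⟩ := lt_iSup_iff.mp hhalf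
    exact ⟨d, hd.le⟩
  obtain ⟨d₀, hd₀T, hd₀max⟩ := hT.exists_maximalFor f _ hTne
  have hfd₀ : f d₀ = M := by
    refine le_antisymm (le_iSup f d₀) (iSup_le fun d => ?_)
    by_cases hd : M / 2 ≤ f d
    · rcases le_or_gt (f d) (f d₀) with h | h
      · exact h
      · exact hd₀max hd h.le
    · exact (not_le.mp hd).le.trans hd₀T
  have hfle : ∀ d : D, f d ≤ M := le_iSup f
  have hμtop : ∀ g : G, μ g ≠ ⊤ := fun g =>
    ((hμ ▸ ENNReal.le_tsum g : μ g ≤ 1).trans_lt (by norm_num)).ne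
  -- rewriting preimages
  have hpre : ∀ (g : G) (d : D),
      (fun x => g • x) ⁻¹' (E ∩ Θ ⁻¹' {d}) = E ∩ Θ ⁻¹' {g⁻¹ • d} := by
    intro g d
    ext x
    have hxE : x ∈ (fun x => g • x) ⁻¹' E ↔ x ∈ E := Set.ext_iff.mp (hEinv g) x
    simp only [Set.mem_preimage, Set.mem_inter_iff, Set.mem_singleton_iff] at hxE ⊢
    rw [hΘequiv, hxE]
    constructor
    · rintro ⟨h1, h2⟩; exact ⟨h1, by rw [← h2, inv_smul_smul]⟩
    · rintro ⟨h1, h2⟩; exact ⟨h1, by rw [h2, smul_inv_smul]⟩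
  -- stationarity of f
  have hfstat : ∀ d : D, f d = ∑' g : G, μ g * f (g⁻¹ • d) := fun d => by
    simpa only [hf, hpre] using hstat (E ∩ Θ ⁻¹' {d}) (hmeas d)
  -- maximum principle step
  have hkey : ∀ d : D, f d = M → ∀ g : G, μ g ≠ 0 → f (g⁻¹ • d) = M := by
    intro d hd g hg
    by_contra hne
    have hlt : f (g⁻¹ • d) < M := lt_of_le_of_ne (hfle _) hne
    have h1 : ∑' g' : G, μ g' * f (g'⁻¹ • d) < ∑' g' : G, μ g' * M := by
      refine ENNReal.tsum_lt_tsum (i := g) ?_ (fun a => mul_le_mul_right (hfle _) _)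
        (ENNReal.mul_lt_mul_right hg (hμtop g) hlt)
      rw [← hfstat d, hd]; exact hMtop
    rw [← hfstat d, hd, ENNReal.tsum_mul_right, hμ, one_mul] at h1
    exact lt_irrefl _ h1
  -- the set of maximizers
  set S : Set D := {d | f d = M} with hS
  have hSfin : S.Finite := hT.subset fun d hd => by
    simp only [hS, Set.mem_setOf_eq] at hd ⊢
    rw [hd]; exact hhalf.le
  have hd₀S : d₀ ∈ S := hfd₀
  have himg : ∀ g : G, (∀ d ∈ S, g • d ∈ S) → ∀ d ∈ S, g⁻¹ • d ∈ S := by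
    intro g hgS d hd
    have himage : (g • ·) '' S = S :=
      Set.eq_of_subset_of_ncard_le (by rintro _ ⟨d', hd', rfl⟩; exact hgS d' hd')
        (Set.ncard_image_of_injective S (MulAction.injective g)).symm.le hSfin
    rw [← himage] at hd
    obtain ⟨d', hd', hdd⟩ := hd
    rw [← hdd, inv_smul_smul]; exact hd'
  have hgen : ∀ g : G, μ g ≠ 0 → ∀ d ∈ S, g • d ∈ S := by
    intro g hg d hd
    have := himg g⁻¹ (fun d hd => hkey d hd g hg) d hd
    rwa [inv_inv] at this
  have hclos : ∀ h ∈ Subgroup.closure {g : G | μ g ≠ 0}, ∀ d ∈ S, h • d ∈ S := by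
    intro h hh
    refine Subgroup.closure_induction (p := fun h _ => ∀ d ∈ S, h • d ∈ S)
      (fun g hg => hgen g hg) ?_ ?_ ?_ hh
    · intro d hd; rwa [one_smul]
    · intro a b _ _ ha hb d hd
      rw [mul_smul]; exact ha _ (hb d hd)
    · exact fun a _ ha => himg a ha
  -- conclusion
  have hne : (E ∩ Θ ⁻¹' {d₀}).Nonempty := by
    apply nonempty_of_measure_ne_zero (μ := ν)
    rw [show ν (E ∩ Θ ⁻¹' {d₀}) = f d₀ from rfl, hfd₀]
    exact hMpos.ne'
  obtain ⟨x, hxE, hxd⟩ := hne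
  refine ⟨x, hxE, hSfin.subset ?_⟩
  rintro e ⟨g, hg, rfl⟩
  rw [show Θ x = d₀ from hxd]
  exact hclos g hg d₀ hd₀S
end

section
/- Let (Ω, P) be a probability space with ergodic measure-preserving transformation T, let G act by isometries on an asymmetric metric space (X,d) with basepoint b, and let Φ_n(ω) = φ(T^{n-1}ω)···φ(ω) be an integrable ergodic cocycle with drift l = lim (1/n) d(b, Φ_n(ω)^{-1} b). Suppose for a.e. ω there is a point z (in the horoboundary, represented by a length function ||·||_z on F_N and constant C(ω)^{-1} = sup_{g≠e} ||g||_z / ||g||_b) such that the horofunction estimate ψ_z(Φ_n^{-1} b) ≤ −(l−ε)n holds for n large. Then for every g ∈ F_N and for n large: C(ω)·||g||_z·e^{(l−ε)n} ≤ ||Φ_n(g)||_b ≤ ||g||_b·e^{(l+ε)n}, where ||h||_b denotes translation length in the base tree b. -/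

private lemma le_exp_of_log_le {s c : ℝ} (h : Real.log s ≤ c) : s ≤ Real.exp c := by
  rcases le_or_gt s 0 with hs | hs
  · exact hs.trans (Real.exp_pos c).le
  · rw [← Real.exp_log hs]; exact Real.exp_le_exp.mpr h

/-- Quantitative growth estimate along a cocycle of automorphisms of `F_N`. Here `ℓb` is the
translation length function of the base tree `b` (so `‖Φₙ(g)‖_b = ‖g‖_{Φₙ⁻¹b} = ℓb (Φₙ g)`),
`ℓz` is the translation length function of a representative of the limiting horofunction `z`,
`l` is the drift, and `C⁻¹ = sup_{g ≠ e} ‖g‖_z / ‖g‖_b`. Assuming the horofunction estimate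
`ψ_z(Φₙ⁻¹ b) ≤ -(l-ε) n` for large `n` (expressed through `log` of the supremum of the length
ratios), and the drift estimate `d(b, Φₙ⁻¹ b) ≤ (l+ε) n` for large `n`, we get for all `ε > 0`,
all large `n` and every `g ∈ F_N`:
`C ‖g‖_z e^{(l-ε)n} ≤ ‖Φₙ(g)‖_b ≤ ‖g‖_b e^{(l+ε)n}`. -/
theorem stmt_16 (N : ℕ)
    (ℓb ℓz : FreeGroup (Fin N) → ℝ)
    (Φ : ℕ → (FreeGroup (Fin N) ≃* FreeGroup (Fin N)))
    (l C : ℝ) (hl : 0 < l) (hC : 0 < C)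
    (hb1 : ℓb 1 = 0) (hz1 : ℓz 1 = 0)
    (hbpos : ∀ g, g ≠ 1 → 0 < ℓb g) (hznn : ∀ g, 0 ≤ ℓz g)
    (hCdef : IsLUB {r : ℝ | ∃ g, g ≠ (1 : FreeGroup (Fin N)) ∧ r = ℓz g / ℓb g} C⁻¹)
    (hbddz : ∀ n, BddAbove {r : ℝ | ∃ g, g ≠ (1 : FreeGroup (Fin N)) ∧ r = ℓz g / ℓb (Φ n g)})
    (hbddb : ∀ n, BddAbove {r : ℝ | ∃ g, g ≠ (1 : FreeGroup (Fin N)) ∧ r = ℓb (Φ n g) / ℓb g})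
    (hhoro : ∀ ε > (0 : ℝ), ∃ n₀ : ℕ, ∀ n ≥ n₀,
      Real.log (sSup {r : ℝ | ∃ g, g ≠ (1 : FreeGroup (Fin N)) ∧ r = ℓz g / ℓb (Φ n g)})
        - Real.log C⁻¹ ≤ -((l - ε) * n))
    (hdrift : ∀ ε > (0 : ℝ), ∃ n₀ : ℕ, ∀ n ≥ n₀,
      Real.log (sSup {r : ℝ | ∃ g, g ≠ (1 : FreeGroup (Fin N)) ∧ r = ℓb (Φ n g) / ℓb g})
        ≤ (l + ε) * n) :
    ∀ ε > (0 : ℝ), ∃ n₀ : ℕ, ∀ n ≥ n₀, ∀ g : FreeGroup (Fin N),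
      C * ℓz g * Real.exp ((l - ε) * n) ≤ ℓb (Φ n g) ∧
      ℓb (Φ n g) ≤ ℓb g * Real.exp ((l + ε) * n) := by
  intro ε hε
  obtain ⟨n₁, h₁⟩ := hhoro ε hε
  obtain ⟨n₂, h₂⟩ := hdrift ε hε
  refine ⟨max n₁ n₂, fun n hn g => ?_⟩
  have hn₁ := h₁ n (le_trans (le_max_left _ _) hn)
  have hn₂ := h₂ n (le_trans (le_max_right _ _) hn)
  by_cases hg : g = 1
  · subst hg
    simp [map_one, hb1, hz1, le_of_lt (Real.exp_pos _)]
  · have hΦg : Φ n g ≠ 1 := fun h => hg (by simpa using (Φ n).injective (h.trans (map_one (Φ n)).symm))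
    have hbΦ := hbpos _ hΦg
    have hbg := hbpos g hg
    constructor
    · -- lower bound
      have hmem : ℓz g / ℓb (Φ n g) ∈ {r : ℝ | ∃ g, g ≠ (1 : FreeGroup (Fin N)) ∧ r = ℓz g / ℓb (Φ n g)} :=
        ⟨g, hg, rfl⟩
      have hle : ℓz g / ℓb (Φ n g) ≤ sSup {r : ℝ | ∃ g, g ≠ (1 : FreeGroup (Fin N)) ∧ r = ℓz g / ℓb (Φ n g)} :=
        le_csSup (hbddz n) hmem
      have hlog : Real.log (sSup {r : ℝ | ∃ g, g ≠ (1 : FreeGroup (Fin N)) ∧ r = ℓz g / ℓb (Φ n g)})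
          ≤ Real.log C⁻¹ + (-((l - ε) * n)) := by linarith
      have hsup := le_exp_of_log_le hlog
      rw [Real.exp_add, Real.exp_log (by positivity : (0:ℝ) < C⁻¹)] at hsup
      have key : ℓz g / ℓb (Φ n g) ≤ C⁻¹ * Real.exp (-((l - ε) * n)) := hle.trans hsup
      have h3 : ℓz g ≤ C⁻¹ * Real.exp (-((l - ε) * n)) * ℓb (Φ n g) :=
        (div_le_iff₀ hbΦ).mp key
      have hE : Real.exp (-((l - ε) * n)) * Real.exp ((l - ε) * n) = 1 := by
        rw [← Real.exp_add]; simp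
      have hEpos := Real.exp_pos ((l - ε) * n)
      calc C * ℓz g * Real.exp ((l - ε) * n)
          ≤ C * (C⁻¹ * Real.exp (-((l - ε) * n)) * ℓb (Φ n g)) * Real.exp ((l - ε) * n) := by
            have := mul_le_mul_of_nonneg_right (mul_le_mul_of_nonneg_left h3 hC.le) hEpos.le
            linarith
        _ = (C * C⁻¹) * (Real.exp (-((l - ε) * n)) * Real.exp ((l - ε) * n)) * ℓb (Φ n g) := by ring
        _ = ℓb (Φ n g) := by rw [mul_inv_cancel₀ hC.ne', hE]; ring
    · -- upper bound
      have hmem : ℓb (Φ n g) / ℓb g ∈ {r : ℝ | ∃ g, g ≠ (1 : FreeGroup (Fin N)) ∧ r = ℓb (Φ n g) / ℓb g} :=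
        ⟨g, hg, rfl⟩
      have hle : ℓb (Φ n g) / ℓb g ≤ sSup {r : ℝ | ∃ g, g ≠ (1 : FreeGroup (Fin N)) ∧ r = ℓb (Φ n g) / ℓb g} :=
        le_csSup (hbddb n) hmem
      have key : ℓb (Φ n g) / ℓb g ≤ Real.exp ((l + ε) * n) := hle.trans (le_exp_of_log_le hn₂)
      have := (div_le_iff₀ hbg).mp key
      linarith [this]
end
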